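/- Let h₁,…,h_d ∈ ℝ^{d(d+1)/2} be linearly independent, and for each i let H_i be the symmetric d×d matrix associated with h_i. Suppose there exist an invertible d×d real matrix Θ and diagonal matrices Γ_i = diag(γ_i), with γ_i ∈ ℝ^d, such that H_i = Θ Γ_i Θᵀ for every i ∈ {1,…,d}. Then the d×d matrix Γ̄ = (γ₁,…,γ_d) has rank d (i.e., Γ̄ is invertible). -/

import Mathlib

open Matrix

/-- The symmetric `d × d` matrix associated with a vector
`h = (h_{1,1},…,h_{1,d},h_{2,2},…,h_{d,d})ᵀ ∈ ℝ^{d(d+1)/2}`: diagonal entries `h_{i,i}`,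
off-diagonal entries `h_{i,j}/2` for `i < j`. -/
noncomputable def symOf {d : ℕ} (h : {pr : Fin d × Fin d // pr.1 ≤ pr.2} → ℝ) :
    Matrix (Fin d) (Fin d) ℝ :=
  Matrix.of fun i j =>
    if hlt : i < j then h ⟨(i, j), le_of_lt hlt⟩ / 2
    else if hgt : j < i then h ⟨(j, i), le_of_lt hgt⟩ / 2
    else h ⟨(i, j), not_lt.mp hgt⟩

lemma symOf_sum {d n : ℕ} (g : Fin n → ℝ) (h : Fin n → ({pr : Fin d × Fin d // pr.1 ≤ pr.2} → ℝ)) :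
    symOf (∑ i, g i • h i) = ∑ i, g i • symOf (h i) := by
  ext a b
  simp only [symOf, Matrix.of_apply, Matrix.sum_apply, Matrix.smul_apply, Finset.sum_apply,
    Pi.smul_apply, smul_eq_mul]
  split_ifs <;> simp [Finset.sum_div, mul_div_assoc]

lemma symOf_eq_zero {d : ℕ} {h : {pr : Fin d × Fin d // pr.1 ≤ pr.2} → ℝ}
    (hz : symOf h = 0) : h = 0 := by
  funext pr
  obtain ⟨⟨i, j⟩, hle⟩ := pr
  have := congrFun (congrFun hz i) j
  simp only [symOf, Matrix.of_apply, Matrix.zero_apply] at this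
  rcases lt_or_eq_of_le hle with hlt | heq
  · rw [dif_pos hlt] at this
    simpa using this
  · simp only at heq
    subst heq
    rw [dif_neg (lt_irrefl i), dif_neg (lt_irrefl i)] at this
    simpa using this

theorem stmt12 (d : ℕ)
    (h : Fin d → ({pr : Fin d × Fin d // pr.1 ≤ pr.2} → ℝ))
    (hli : LinearIndependent ℝ h)
    (Θ : Matrix (Fin d) (Fin d) ℝ) (hΘ : IsUnit Θ.det)
    (γ : Fin d → Fin d → ℝ)
    (hH : ∀ i, symOf (h i) = Θ * Matrix.diagonal (γ i) * Θᵀ) :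
    (Matrix.of fun ℓ i => γ i ℓ : Matrix (Fin d) (Fin d) ℝ).rank = d ∧
    IsUnit (Matrix.of fun ℓ i => γ i ℓ : Matrix (Fin d) (Fin d) ℝ).det := by
  have hγli : LinearIndependent ℝ γ := by
    rw [Fintype.linearIndependent_iff]
    intro g hg
    have hsum : (∑ i, g i • symOf (h i)) = 0 := by
      simp only [hH]
      have : (∑ i, g i • (Θ * Matrix.diagonal (γ i) * Θᵀ))
          = Θ * Matrix.diagonal (∑ i, g i • γ i) * Θᵀ := by
        rw [Finset.sum_congr rfl (fun i _ => by
          rw [Matrix.mul_smul, Matrix.smul_mul] : ∀ i ∈ Finset.univ,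
            g i • (Θ * Matrix.diagonal (γ i) * Θᵀ) = Θ * (g i • Matrix.diagonal (γ i)) * Θᵀ)]
        rw [show Matrix.diagonal (∑ i, g i • γ i)
            = ∑ i, Matrix.diagonal (g i • γ i) from
            map_sum (Matrix.diagonalAddMonoidHom (Fin d) ℝ) _ _]
        simp_rw [Matrix.diagonal_smul, ← Finset.sum_mul, ← Matrix.mul_sum]
      rw [this, hg]
      ext a b; simp [Matrix.mul_apply, Matrix.diagonal_apply]
    rw [← symOf_sum] at hsum
    have h0 : (∑ i, g i • h i) = 0 := symOf_eq_zero hsum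
    exact Fintype.linearIndependent_iff.mp hli g h0
  have hunit : IsUnit (Matrix.of fun ℓ i => γ i ℓ : Matrix (Fin d) (Fin d) ℝ) := by
    rw [← Matrix.linearIndependent_cols_iff_isUnit]
    exact hγli
  have hdet := (Matrix.isUnit_iff_isUnit_det _).mp hunit
  exact ⟨by rw [Matrix.rank_of_isUnit _ hunit]; simp, hdet⟩
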